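/- Let n ≥ 1 and let 𝐀, 𝐂 be linear operators on 𝐠 = Fin n → g with blocks A_{ij} and C_{ij}, where the blocks of 𝐀 satisfy (A_{ij})* = −A_{ji}. Then the condition Hom(𝐂, 𝐀) on the algebra 𝐠 holds if and only if both of the following hold: (1) Hom(C_{ij}, A_{jj}) for all pairs 1 ≤ i, j ≤ n; (2) Aux(C_{ij}, C_{ik}; A_{kj}, A_{jk}) for all 1 ≤ i, j, k ≤ n with j < k. -/

import Mathlib

open Matrix

attribute [local instance] Matrix.normedAddCommGroup Matrix.normedSpace

/-- The trace form `⟨X,Y⟩ = trace (X⬝Y)` on `g = Matrix (Fin N) (Fin N) ℝ`. -/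
noncomputable def tf {N : ℕ} (X Y : Matrix (Fin N) (Fin N) ℝ) : ℝ := (X * Y).trace

/-- The modified Yang–Baxter equation mYB(R;α) on `g`. -/
def mYB {N : ℕ} (R : Matrix (Fin N) (Fin N) ℝ →ₗ[ℝ] Matrix (Fin N) (Fin N) ℝ) (α : ℝ) : Prop :=
  ∀ X Y, R X * R Y - R Y * R X
    = R ((R X * Y - Y * R X) + (X * R Y - R Y * X)) - α • (X * Y - Y * X)

/-- The condition Hom(S,A) on `g`. -/
def homc {N : ℕ} (S A : Matrix (Fin N) (Fin N) ℝ →ₗ[ℝ] Matrix (Fin N) (Fin N) ℝ) : Prop :=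
  ∀ X Y, S X * S Y - S Y * S X = S ((A X * Y - Y * A X) + (X * A Y - A Y * X))

/-- The condition Aux(P,Q;R,S): `[P(X),Q(Y)] = Q([R(X),Y]) + P([X,S(Y)])`. -/
def aux {N : ℕ} (P Q R S : Matrix (Fin N) (Fin N) ℝ →ₗ[ℝ] Matrix (Fin N) (Fin N) ℝ) : Prop :=
  ∀ X Y, P X * Q Y - Q Y * P X = Q (R X * Y - Y * R X) + P (X * S Y - S Y * X)

/-- The operator on `𝐠 = Fin n → g` encoded by the blocks `A i j`:
`(𝐀 u)_i = Σ_j A_{ij}(u_j)`. -/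
noncomputable def opApp {N n : ℕ}
    (A : Fin n → Fin n → (Matrix (Fin N) (Fin N) ℝ →ₗ[ℝ] Matrix (Fin N) (Fin N) ℝ))
    (X : Fin n → Matrix (Fin N) (Fin N) ℝ) : Fin n → Matrix (Fin N) (Fin N) ℝ :=
  fun i => ∑ j, A i j (X j)

/-- The modified Yang–Baxter equation mYB(𝐀;α) on the direct sum `𝐠 = Fin n → g`
(with componentwise multiplication), for the operator encoded by blocks `A i j`. -/
def mYBbig {N n : ℕ}
    (A : Fin n → Fin n → (Matrix (Fin N) (Fin N) ℝ →ₗ[ℝ] Matrix (Fin N) (Fin N) ℝ))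
    (α : ℝ) : Prop :=
  ∀ X Y : Fin n → Matrix (Fin N) (Fin N) ℝ,
    opApp A X * opApp A Y - opApp A Y * opApp A X
      = opApp A ((opApp A X * Y - Y * opApp A X) + (X * opApp A Y - opApp A Y * X))
        - α • (X * Y - Y * X)

/-- The condition Hom(𝐂,𝐀) on the direct sum `𝐠 = Fin n → g`, for operators
encoded by blocks. -/
def homBig {N n : ℕ}
    (C A : Fin n → Fin n → (Matrix (Fin N) (Fin N) ℝ →ₗ[ℝ] Matrix (Fin N) (Fin N) ℝ)) : Prop :=
  ∀ X Y : Fin n → Matrix (Fin N) (Fin N) ℝ,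
    opApp C X * opApp C Y - opApp C Y * opApp C X
      = opApp C ((opApp A X * Y - Y * opApp A X) + (X * opApp A Y - opApp A Y * X))

section helpers

variable {N n : ℕ}
  (A C : Fin n → Fin n → (Matrix (Fin N) (Fin N) ℝ →ₗ[ℝ] Matrix (Fin N) (Fin N) ℝ))

lemma lhsf (X Y : Fin n → Matrix (Fin N) (Fin N) ℝ) (i : Fin n) :
    (opApp C X * opApp C Y - opApp C Y * opApp C X) i
      = ∑ j, ∑ k, (C i j (X j) * C i k (Y k) - C i k (Y k) * C i j (X j)) := by
  rw [Pi.sub_apply, Pi.mul_apply, Pi.mul_apply]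
  simp only [opApp]
  rw [Finset.sum_mul_sum, Finset.sum_mul_sum,
    Finset.sum_comm (f := fun j k => C i j (Y j) * C i k (X k)),
    ← Finset.sum_sub_distrib]
  exact Finset.sum_congr rfl fun j _ => (Finset.sum_sub_distrib _ _).symm

lemma rhsf (X Y : Fin n → Matrix (Fin N) (Fin N) ℝ) (i : Fin n) :
    opApp C ((opApp A X * Y - Y * opApp A X) + (X * opApp A Y - opApp A Y * X)) i
      = ∑ j, ∑ k, (C i j (A j k (X k) * Y j - Y j * A j k (X k))
          + C i j (X j * A j k (Y k) - A j k (Y k) * X j)) := by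
  simp only [opApp, Pi.add_apply, Pi.sub_apply, Pi.mul_apply, Finset.sum_mul, Finset.mul_sum,
    ← Finset.sum_sub_distrib, ← Finset.sum_add_distrib, map_sum, map_add]

lemma dcollapse {M : Type*} [AddCommMonoid M] {n : ℕ} (F : Fin n → Fin n → M) (a b : Fin n)
    (h : ∀ p q, p ≠ a ∨ q ≠ b → F p q = 0) : (∑ p, ∑ q, F p q) = F a b := by
  rw [Finset.sum_eq_single_of_mem a (Finset.mem_univ a)
      (fun p _ hp => Finset.sum_eq_zero fun q _ => h p q (Or.inl hp)),
    Finset.sum_eq_single_of_mem b (Finset.mem_univ b) (fun q _ hq => h a q (Or.inr hq))]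

lemma key (h1 : ∀ i j, homc (C i j) (A j j))
    (h2 : ∀ i j k, j < k → aux (C i j) (C i k) (A k j) (A j k))
    (i j k : Fin n) (X Y : Matrix (Fin N) (Fin N) ℝ) :
    C i j X * C i k Y - C i k Y * C i j X
      = C i k (A k j X * Y - Y * A k j X) + C i j (X * A j k Y - A j k Y * X) := by
  rcases lt_trichotomy j k with h | h | h
  · exact h2 i j k h X Y
  · subst h
    rw [h1 i j X Y, map_add, add_comm]
  · have h' := h2 i k j h Y X
    rw [← neg_sub (C i k Y * C i j X) (C i j X * C i k Y), h', neg_add, ← map_neg, ← map_neg,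
      neg_sub, neg_sub]
    exact add_comm _ _

end helpers

theorem statement6 (N n : ℕ) (hN : 1 ≤ N) (hn : 1 ≤ n)
    (A C : Fin n → Fin n → (Matrix (Fin N) (Fin N) ℝ →ₗ[ℝ] Matrix (Fin N) (Fin N) ℝ))
    (hskew : ∀ i j X Y, tf (A i j X) Y = - tf X (A j i Y)) :
    homBig C A ↔
      ((∀ i j, homc (C i j) (A j j))
        ∧ (∀ i j k, j < k → aux (C i j) (C i k) (A k j) (A j k))) := by
  constructor
  · intro h
    constructor
    · intro i j X Y
      have h' := congrFun (h (Pi.single (M := fun _ => Matrix (Fin N) (Fin N) ℝ) j X) (Pi.single (M := fun _ => Matrix (Fin N) (Fin N) ℝ) j Y)) i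
      rw [lhsf, rhsf] at h'
      simp only [Finset.sum_add_distrib] at h'
      have e1 : (∑ p, ∑ q, (C i p (Pi.single (M := fun _ => Matrix (Fin N) (Fin N) ℝ) j X p) * C i q (Pi.single (M := fun _ => Matrix (Fin N) (Fin N) ℝ) j Y q)
            - C i q (Pi.single (M := fun _ => Matrix (Fin N) (Fin N) ℝ) j Y q) * C i p (Pi.single (M := fun _ => Matrix (Fin N) (Fin N) ℝ) j X p)))
          = C i j X * C i j Y - C i j Y * C i j X := by
        refine (dcollapse _ j j ?_).trans (by simp)
        intro p q hpq
        rcases hpq with hp | hq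
        · simp [Pi.single_eq_of_ne hp]
        · simp [Pi.single_eq_of_ne hq]
      have eG : (∑ p, ∑ q, C i p (A p q (Pi.single (M := fun _ => Matrix (Fin N) (Fin N) ℝ) j X q) * Pi.single (M := fun _ => Matrix (Fin N) (Fin N) ℝ) j Y p
            - Pi.single (M := fun _ => Matrix (Fin N) (Fin N) ℝ) j Y p * A p q (Pi.single (M := fun _ => Matrix (Fin N) (Fin N) ℝ) j X q)))
          = C i j (A j j X * Y - Y * A j j X) := by
        refine (dcollapse _ j j ?_).trans (by simp)
        intro p q hpq
        rcases hpq with hp | hq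
        · simp [Pi.single_eq_of_ne hp]
        · simp [Pi.single_eq_of_ne hq]
      have eH : (∑ p, ∑ q, C i p (Pi.single (M := fun _ => Matrix (Fin N) (Fin N) ℝ) j X p * A p q (Pi.single (M := fun _ => Matrix (Fin N) (Fin N) ℝ) j Y q)
            - A p q (Pi.single (M := fun _ => Matrix (Fin N) (Fin N) ℝ) j Y q) * Pi.single (M := fun _ => Matrix (Fin N) (Fin N) ℝ) j X p))
          = C i j (X * A j j Y - A j j Y * X) := by
        refine (dcollapse _ j j ?_).trans (by simp)
        intro p q hpq
        rcases hpq with hp | hq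
        · simp [Pi.single_eq_of_ne hp]
        · simp [Pi.single_eq_of_ne hq]
      rw [e1, eG, eH] at h'
      rw [map_add]
      exact h'
    · intro i j k hjk X Y
      have h' := congrFun (h (Pi.single (M := fun _ => Matrix (Fin N) (Fin N) ℝ) j X) (Pi.single (M := fun _ => Matrix (Fin N) (Fin N) ℝ) k Y)) i
      rw [lhsf, rhsf] at h'
      simp only [Finset.sum_add_distrib] at h'
      have e1 : (∑ p, ∑ q, (C i p (Pi.single (M := fun _ => Matrix (Fin N) (Fin N) ℝ) j X p) * C i q (Pi.single (M := fun _ => Matrix (Fin N) (Fin N) ℝ) k Y q)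
            - C i q (Pi.single (M := fun _ => Matrix (Fin N) (Fin N) ℝ) k Y q) * C i p (Pi.single (M := fun _ => Matrix (Fin N) (Fin N) ℝ) j X p)))
          = C i j X * C i k Y - C i k Y * C i j X := by
        refine (dcollapse _ j k ?_).trans (by simp)
        intro p q hpq
        rcases hpq with hp | hq
        · simp [Pi.single_eq_of_ne hp]
        · simp [Pi.single_eq_of_ne hq]
      have eG : (∑ p, ∑ q, C i p (A p q (Pi.single (M := fun _ => Matrix (Fin N) (Fin N) ℝ) j X q) * Pi.single (M := fun _ => Matrix (Fin N) (Fin N) ℝ) k Y p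
            - Pi.single (M := fun _ => Matrix (Fin N) (Fin N) ℝ) k Y p * A p q (Pi.single (M := fun _ => Matrix (Fin N) (Fin N) ℝ) j X q)))
          = C i k (A k j X * Y - Y * A k j X) := by
        refine (dcollapse _ k j ?_).trans (by simp)
        intro p q hpq
        rcases hpq with hp | hq
        · simp [Pi.single_eq_of_ne hp]
        · simp [Pi.single_eq_of_ne hq]
      have eH : (∑ p, ∑ q, C i p (Pi.single (M := fun _ => Matrix (Fin N) (Fin N) ℝ) j X p * A p q (Pi.single (M := fun _ => Matrix (Fin N) (Fin N) ℝ) k Y q)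
            - A p q (Pi.single (M := fun _ => Matrix (Fin N) (Fin N) ℝ) k Y q) * Pi.single (M := fun _ => Matrix (Fin N) (Fin N) ℝ) j X p))
          = C i j (X * A j k Y - A j k Y * X) := by
        refine (dcollapse _ j k ?_).trans (by simp)
        intro p q hpq
        rcases hpq with hp | hq
        · simp [Pi.single_eq_of_ne hp]
        · simp [Pi.single_eq_of_ne hq]
      rw [e1, eG, eH] at h'
      exact h'
  · rintro ⟨h1, h2⟩ X Y
    funext i
    rw [lhsf, rhsf]
    calc ∑ j, ∑ k, (C i j (X j) * C i k (Y k) - C i k (Y k) * C i j (X j))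
        = ∑ j, ∑ k, (C i k (A k j (X j) * Y k - Y k * A k j (X j))
            + C i j (X j * A j k (Y k) - A j k (Y k) * X j)) :=
          Finset.sum_congr rfl fun j _ => Finset.sum_congr rfl fun k _ =>
            key A C h1 h2 i j k (X j) (Y k)
      _ = _ := by
          simp only [Finset.sum_add_distrib]
          congr 1
          exact Finset.sum_comm
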